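/- Let Γ be an m×m real symmetric positive definite matrix, let U_k be an m×k real matrix with U_kᵀ Γ⁻¹ U_k = I_k, and let D_k = diag(d₁, …, d_k) with 0 ≤ dᵢ < 1 for all i. Then the matrix Γ − U_k D_k U_kᵀ is symmetric positive definite. -/

import Mathlib

open Matrix


private lemma adj_dp {m n : ℕ} (A : Matrix (Fin m) (Fin n) ℝ) (x : Fin n → ℝ) (y : Fin m → ℝ) :
    (A *ᵥ x) ⬝ᵥ y = x ⬝ᵥ (Aᵀ *ᵥ y) := by
  rw [Matrix.dotProduct_mulVec, Matrix.vecMul_transpose]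

/-- if `U_kᵀ Γ⁻¹ U_k = I_k` and `D_k = diag(d₁, …, d_k)` with
`0 ≤ dᵢ < 1`, then the low-rank-update posterior covariance approximation
`Γ − U_k D_k U_kᵀ` is symmetric positive definite. -/
theorem stmt_19 {m k : ℕ} (Γ : Matrix (Fin m) (Fin m) ℝ)
    (Uk : Matrix (Fin m) (Fin k) ℝ) (d : Fin k → ℝ)
    (hΓ : Γ.PosDef) (hU : Ukᵀ * Γ⁻¹ * Uk = 1)
    (hd : ∀ i, 0 ≤ d i ∧ d i < 1) :
    (Γ - Uk * Matrix.diagonal d * Ukᵀ).PosDef := by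
  have hΓinv : Γ⁻¹.PosDef := hΓ.inv
  have hsym : Γᵀ = Γ := hΓ.isHermitian
  have hdet : IsUnit Γ.det := hΓ.det_pos.ne'.isUnit
  have hΓΓi : Γ * Γ⁻¹ = 1 := Matrix.mul_nonsing_inv _ hdet
  have hΓiΓ : Γ⁻¹ * Γ = 1 := Matrix.nonsing_inv_mul _ hdet
  refine Matrix.PosDef.of_dotProduct_mulVec_pos ?_ ?_
  · have h1 : (Uk * Matrix.diagonal d * Ukᵀ).IsHermitian := by
      simpa [Matrix.conjTranspose_eq_transpose_of_trivial] using
        Matrix.isHermitian_mul_mul_conjTranspose Uk (Matrix.isHermitian_diagonal d)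
    exact hΓ.isHermitian.sub h1
  · intro x hx
    set c : Fin k → ℝ := Ukᵀ *ᵥ x with hc
    set w : Fin m → ℝ := Γ *ᵥ x - Uk *ᵥ c with hw
    have hUc : (Uk *ᵥ c) ⬝ᵥ (Γ⁻¹ *ᵥ (Uk *ᵥ c)) = c ⬝ᵥ c := by
      rw [adj_dp, Matrix.mulVec_mulVec, Matrix.mulVec_mulVec, hU, Matrix.one_mulVec]
    have hGx : (Γ *ᵥ x) ⬝ᵥ (Γ⁻¹ *ᵥ (Uk *ᵥ c)) = c ⬝ᵥ c := by
      rw [adj_dp, Matrix.mulVec_mulVec, Matrix.mulVec_mulVec, hsym, hΓΓi, Matrix.one_mul,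
        dotProduct_comm, adj_dp]
    have hxG : (Uk *ᵥ c) ⬝ᵥ (Γ⁻¹ *ᵥ (Γ *ᵥ x)) = c ⬝ᵥ c := by
      rw [Matrix.mulVec_mulVec x Γ⁻¹ Γ, hΓiΓ, Matrix.one_mulVec, adj_dp]
    have hGG : (Γ *ᵥ x) ⬝ᵥ (Γ⁻¹ *ᵥ (Γ *ᵥ x)) = x ⬝ᵥ (Γ *ᵥ x) := by
      rw [Matrix.mulVec_mulVec x Γ⁻¹ Γ, hΓiΓ, Matrix.one_mulVec, adj_dp, hsym]
    have hkey : w ⬝ᵥ (Γ⁻¹ *ᵥ w) = x ⬝ᵥ (Γ *ᵥ x) - c ⬝ᵥ c := by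
      rw [hw, Matrix.mulVec_sub, dotProduct_sub, sub_dotProduct, sub_dotProduct,
        hUc, hGx, hxG, hGG]
      ring
    have hterm : x ⬝ᵥ ((Uk * Matrix.diagonal d * Ukᵀ) *ᵥ x) = ∑ i, d i * (c i) ^ 2 := by
      rw [← Matrix.mulVec_mulVec, ← Matrix.mulVec_mulVec, dotProduct_comm, adj_dp]
      rw [hc]
      simp only [dotProduct, Matrix.mulVec_diagonal]
      exact Finset.sum_congr rfl fun i _ => by ring
    have hcc : c ⬝ᵥ c = ∑ i, (c i) ^ 2 := by
      simp only [dotProduct]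
      exact Finset.sum_congr rfl fun i _ => by ring
    have hwpos : 0 ≤ w ⬝ᵥ (Γ⁻¹ *ᵥ w) := by
      simpa using hΓinv.posSemidef.dotProduct_mulVec_nonneg w
    have hsplit : ∑ i, (1 - d i) * (c i) ^ 2 = (∑ i, (c i) ^ 2) - ∑ i, d i * (c i) ^ 2 := by
      rw [← Finset.sum_sub_distrib]
      exact Finset.sum_congr rfl fun i _ => by ring
    have hgoal : star x ⬝ᵥ (Γ - Uk * Matrix.diagonal d * Ukᵀ) *ᵥ x
        = w ⬝ᵥ (Γ⁻¹ *ᵥ w) + ∑ i, (1 - d i) * (c i) ^ 2 := by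
      rw [show (star x : Fin m → ℝ) = x from rfl, Matrix.sub_mulVec, dotProduct_sub, hterm,
        hsplit]
      rw [hcc] at hkey
      linarith
    rw [hgoal]
    by_cases hczero : c = 0
    · have h0 : ∑ i, (1 - d i) * (c i) ^ 2 = 0 := by simp [hczero]
      rw [h0, add_zero, hkey]
      have h1 := hΓ.dotProduct_mulVec_pos hx
      have h2 : c ⬝ᵥ c = 0 := by simp [hczero]
      rw [h2, sub_zero]
      simpa using h1
    · have hspos : 0 < ∑ i, (1 - d i) * (c i) ^ 2 := by
        obtain ⟨i, hi⟩ := Function.ne_iff.mp hczero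
        refine Finset.sum_pos'
          (fun j _ => mul_nonneg (by linarith [(hd j).2]) (sq_nonneg _))
          ⟨i, Finset.mem_univ i, ?_⟩
        have h1 : (0:ℝ) < 1 - d i := by linarith [(hd i).2]
        have h2 : c i ≠ 0 := by simpa using hi
        positivity
      linarith
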